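/- Let d ≥ 1 and let Z be a random vector in ℝ^d whose coordinates are independent standard real Gaussians (i.e., Z ~ N(0, I_d)). Then for every ε ≥ 0, E[‖Z‖_∞ · 1{‖Z‖₂ ≥ ε}] ≤ (2/√(2π)) · d · exp(−ε²/(2d)), where ‖z‖_∞ = max_i |z_i| and ‖z‖₂ = √(Σ_i z_i²). -/

import Mathlib

open MeasureTheory ProbabilityTheory Real Set Filter
open scoped ENNReal NNReal

section Helpers
variable {dummysec : Unit}
private lemma map_eval_pi_gauss {d : ℕ} (i : Fin d) :
    Measure.map (Function.eval i) (Measure.pi fun _ : Fin d => gaussianReal 0 1) =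
      gaussianReal 0 1 := by
  ext s hs
  rw [Measure.map_apply (measurable_pi_apply i) hs, Set.eval_preimage, Measure.pi_pi]
  rw [Finset.prod_eq_single i (fun j _ hj => by simp [Function.update_of_ne hj]) (by simp)]
  simp

private lemma gpdf_eq (x : ℝ) : gaussianPDFReal 0 1 x = (Real.sqrt (2 * π))⁻¹ * Real.exp (-x ^ 2 / 2) := by
  simp [gaussianPDFReal]

private lemma integral_Ioi_x_exp (a : ℝ) :
    ∫ x in Ioi a, x * Real.exp (-x ^ 2 / 2) = Real.exp (-a ^ 2 / 2) := by
  have hderiv : ∀ x ∈ Ioi a, HasDerivAt (fun x : ℝ => -Real.exp (-x ^ 2 / 2))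
      (x * Real.exp (-x ^ 2 / 2)) x := by
    intro x _
    have h1 : HasDerivAt (fun x : ℝ => -x ^ 2 / 2) (-x) x := by
      have := (hasDerivAt_pow 2 x).neg.div_const 2
      exact this.congr_deriv (by ring_nf)
    have := (h1.exp).neg
    exact this.congr_deriv (by ring)
  have hint : IntegrableOn (fun x : ℝ => x * Real.exp (-x ^ 2 / 2)) (Ioi a) := by
    have h := integrable_mul_exp_neg_mul_sq (by norm_num : (0:ℝ) < 1/2)
    have h2 : (fun x : ℝ => x * Real.exp (-(1/2) * x ^ 2)) =
        fun x : ℝ => x * Real.exp (-x ^ 2 / 2) := by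
      funext x; ring_nf
    rw [h2] at h
    exact h.integrableOn
  have htend : Tendsto (fun x : ℝ => -Real.exp (-x ^ 2 / 2)) atTop (nhds 0) := by
    have h1 : Tendsto (fun x : ℝ => -x ^ 2 / 2) atTop atBot := by
      have h2 : Tendsto (fun x : ℝ => x ^ 2) atTop atTop := tendsto_pow_atTop two_ne_zero
      have := h2.atTop_mul_const_of_neg (by norm_num : (-(1:ℝ)/2) < 0)
      convert this using 2 with x
      ring
    have := (Real.tendsto_exp_atBot.comp h1).neg
    simpa using this
  have hcont : ContinuousWithinAt (fun x : ℝ => -Real.exp (-x ^ 2 / 2)) (Ici a) a :=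
    (Continuous.neg (by continuity)).continuousWithinAt
  have := integral_Ioi_of_hasDerivAt_of_tendsto hcont hderiv hint htend
  rw [this]; ring

private lemma hμeq : gaussianReal 0 1 =
    volume.withDensity fun x => ((gaussianPDFReal 0 1 x).toNNReal : ℝ≥0∞) := by
  rw [gaussianReal_of_var_ne_zero 0 one_ne_zero]; rfl

private lemma pdf_nnmeas : Measurable fun x => (gaussianPDFReal 0 1 x).toNNReal :=
  (measurable_gaussianPDFReal 0 1).real_toNNReal

private lemma hSmeas (a : ℝ) : MeasurableSet {x : ℝ | a ≤ |x|} :=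
  measurableSet_le measurable_const measurable_abs

private lemma hg_meas (a : ℝ) : Measurable ({x : ℝ | a ≤ |x|}.indicator fun x => |x|) :=
  measurable_abs.indicator (hSmeas a)

private lemma pdf_mul_abs_int : Integrable (fun x => gaussianPDFReal 0 1 x * |x|) := by
  have h := ((integrable_mul_exp_neg_mul_sq (by norm_num : (0:ℝ) < 1/2)).abs).const_mul
    ((Real.sqrt (2 * π))⁻¹)
  have h2 : (fun x : ℝ => (Real.sqrt (2 * π))⁻¹ * |x * Real.exp (-(1/2) * x ^ 2)|) =
      fun x => gaussianPDFReal 0 1 x * |x| := by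
    funext x
    rw [abs_mul, abs_of_pos (Real.exp_pos _), gpdf_eq]
    ring_nf
  rwa [h2] at h

private lemma gauss_tail_integrable (a : ℝ) :
    Integrable ({x : ℝ | a ≤ |x|}.indicator fun x => |x|) (gaussianReal 0 1) := by
  rw [hμeq, integrable_withDensity_iff_integrable_coe_smul pdf_nnmeas]
  refine pdf_mul_abs_int.mono' ?_ ?_
  · exact (pdf_nnmeas.coe_nnreal_real.mul (hg_meas a)).aestronglyMeasurable
  · filter_upwards with x
    simp only [NNReal.smul_def, smul_eq_mul, Real.coe_toNNReal _ (gaussianPDFReal_nonneg 0 1 x)]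
    have hind0 : 0 ≤ ({x : ℝ | a ≤ |x|}.indicator fun x => |x|) x :=
      Set.indicator_nonneg (fun y _ => abs_nonneg y) x
    have hindle : ({x : ℝ | a ≤ |x|}.indicator fun x => |x|) x ≤ |x| :=
      Set.indicator_le_self' (fun y _ => abs_nonneg y) x
    rw [Real.norm_eq_abs, abs_mul, abs_of_nonneg (gaussianPDFReal_nonneg 0 1 x),
      abs_of_nonneg hind0]
    exact mul_le_mul_of_nonneg_left hindle (gaussianPDFReal_nonneg 0 1 x)

private lemma gauss_tail_integral (a : ℝ) (ha : 0 ≤ a) :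
    ∫ x, ({x : ℝ | a ≤ |x|}.indicator fun x => |x|) x ∂(gaussianReal 0 1)
      = 2 / Real.sqrt (2 * π) * Real.exp (-a ^ 2 / 2) := by
  rw [hμeq, integral_withDensity_eq_integral_smul pdf_nnmeas]
  have h1 : ∀ x : ℝ, (gaussianPDFReal 0 1 x).toNNReal •
        ({x : ℝ | a ≤ |x|}.indicator fun x => |x|) x
      = ({x : ℝ | a ≤ |x|}.indicator fun x => gaussianPDFReal 0 1 x * |x|) x := by
    intro x
    simp only [NNReal.smul_def, smul_eq_mul, Real.coe_toNNReal _ (gaussianPDFReal_nonneg 0 1 x)]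
    by_cases hx : x ∈ {x : ℝ | a ≤ |x|}
    · rw [Set.indicator_of_mem hx, Set.indicator_of_mem hx]
    · rw [Set.indicator_of_notMem hx, Set.indicator_of_notMem hx, mul_zero]
  simp_rw [h1]
  rw [integral_indicator (hSmeas a)]
  have hset : {x : ℝ | a ≤ |x|} = Iic (-a) ∪ Ici a := by
    ext x
    simp only [mem_setOf_eq, mem_union, mem_Iic, mem_Ici, le_abs, le_neg]
    tauto
  have hdisj : AEDisjoint volume (Iic (-a)) (Ici a) := by
    have hsub : Iic (-a) ∩ Ici a ⊆ {0} := by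
      rintro x ⟨h1, h2⟩
      simp only [mem_Iic] at h1
      simp only [mem_Ici] at h2
      have h4 : a = 0 := le_antisymm (by linarith) ha
      subst h4
      simp only [mem_singleton_iff]
      linarith
    exact measure_mono_null hsub Real.volume_singleton
  rw [hset, integral_union_ae hdisj measurableSet_Ici.nullMeasurableSet
    pdf_mul_abs_int.integrableOn pdf_mul_abs_int.integrableOn]
  have hIci : ∫ x in Ici a, gaussianPDFReal 0 1 x * |x|
      = (Real.sqrt (2 * π))⁻¹ * Real.exp (-a ^ 2 / 2) := by
    rw [setIntegral_congr_fun measurableSet_Ici (g := fun x =>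
        (Real.sqrt (2 * π))⁻¹ * (x * Real.exp (-x ^ 2 / 2)))
      (fun x hx => by rw [gpdf_eq, abs_of_nonneg (ha.trans hx)]; ring)]
    rw [MeasureTheory.integral_const_mul, integral_Ici_eq_integral_Ioi, integral_Ioi_x_exp]
  have hIic : ∫ x in Iic (-a), gaussianPDFReal 0 1 x * |x|
      = (Real.sqrt (2 * π))⁻¹ * Real.exp (-a ^ 2 / 2) := by
    have key : ∫ x in Iic (-a), gaussianPDFReal 0 1 x * |x|
        = ∫ x in Iic (-a), (fun y => (Real.sqrt (2 * π))⁻¹ * (y * Real.exp (-y ^ 2 / 2))) (-x) := by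
      refine setIntegral_congr_fun measurableSet_Iic fun x hx => ?_
      have hx0 : x ≤ 0 := le_trans hx (neg_nonpos.mpr ha)
      simp only
      rw [gpdf_eq, abs_of_nonpos hx0]
      ring_nf
    have hcn := integral_comp_neg_Iic (-a)
      (fun y : ℝ => (Real.sqrt (2 * π))⁻¹ * (y * Real.exp (-y ^ 2 / 2)))
    rw [key, hcn, neg_neg, MeasureTheory.integral_const_mul, integral_Ioi_x_exp]
  rw [hIci, hIic]
  rw [div_eq_mul_inv]
  ring

private lemma gauss_abs_integrable : Integrable (fun x : ℝ => |x|) (gaussianReal 0 1) := by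
  have h := gauss_tail_integrable 0
  have hset : {x : ℝ | (0:ℝ) ≤ |x|} = Set.univ := Set.eq_univ_of_forall fun x => abs_nonneg x
  rwa [hset, Set.indicator_univ] at h

end Helpers

/-- Let `d ≥ 1` and `Z ~ N(0, I_d)` (i.e. `d` i.i.d. standard Gaussian coordinates).
Then for every `ε ≥ 0`,
`E[‖Z‖_∞ · 1{‖Z‖₂ ≥ ε}] ≤ (2/√(2π)) · d · exp(−ε²/(2d))`. -/
theorem std_gaussian_sup_norm_tail_bound {d : ℕ} (hd : 1 ≤ d) (ε : ℝ) (hε : 0 ≤ ε) :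
    ∫ z in {z : Fin d → ℝ | ε ≤ Real.sqrt (∑ i, z i ^ 2)}, (⨆ i, |z i|)
        ∂(Measure.pi fun _ : Fin d => gaussianReal 0 1) ≤
      2 / Real.sqrt (2 * Real.pi) * d * Real.exp (-ε ^ 2 / (2 * d)) := by
  haveI : Nonempty (Fin d) := Fin.pos_iff_nonempty.mp hd
  have hd0 : (0:ℝ) < d := by exact_mod_cast hd
  have hsd : (0:ℝ) < Real.sqrt d := Real.sqrt_pos.mpr hd0
  set a : ℝ := ε / Real.sqrt d with ha_def
  have ha : 0 ≤ a := div_nonneg hε hsd.le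
  set g : ℝ → ℝ := {x : ℝ | a ≤ |x|}.indicator fun x => |x| with hg_def
  set μd := Measure.pi fun _ : Fin d => gaussianReal 0 1 with hμd
  set S := {z : Fin d → ℝ | ε ≤ Real.sqrt (∑ i, z i ^ 2)} with hS_def
  have hSm : MeasurableSet S := by
    refine measurableSet_le measurable_const ?_
    exact (Real.continuous_sqrt.measurable).comp
      (Finset.measurable_sum _ fun i _ => (measurable_pi_apply i).pow_const 2)
  have hcoord_int : ∀ i : Fin d, Integrable (fun z : Fin d → ℝ => g (z i)) μd := by
    intro i
    have h1 : Integrable g (Measure.map (Function.eval i) μd) := by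
      rw [hμd, map_eval_pi_gauss]; exact gauss_tail_integrable a
    exact (integrable_map_measure (hg_meas a).aestronglyMeasurable
      (measurable_pi_apply i).aemeasurable).mp h1
  have habs_int : ∀ i : Fin d, Integrable (fun z : Fin d → ℝ => |z i|) μd := by
    intro i
    have h1 : Integrable (fun x : ℝ => |x|) (Measure.map (Function.eval i) μd) := by
      rw [hμd, map_eval_pi_gauss]; exact gauss_abs_integrable
    exact (integrable_map_measure measurable_abs.aestronglyMeasurable
      (measurable_pi_apply i).aemeasurable).mp h1
  have hcoord_val : ∀ i : Fin d, ∫ z, g (z i) ∂μd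
      = 2 / Real.sqrt (2 * π) * Real.exp (-a ^ 2 / 2) := by
    intro i
    have h1 : ∫ z, g (z i) ∂μd = ∫ x, g x ∂(Measure.map (Function.eval i) μd) :=
      (integral_map (measurable_pi_apply i).aemeasurable
        (hg_meas a).aestronglyMeasurable).symm
    rw [h1, hμd, map_eval_pi_gauss]
    exact gauss_tail_integral a ha
  have hG_int : Integrable (fun z => ∑ i, g (z i)) μd :=
    integrable_finset_sum _ fun i _ => hcoord_int i
  have hFm : Measurable fun z : Fin d → ℝ => ⨆ i, |z i| := by
    have h : (fun z : Fin d → ℝ => ⨆ i, |z i|)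
        = Finset.univ.sup' Finset.univ_nonempty fun i => fun z : Fin d → ℝ => |z i| := by
      funext z
      rw [Finset.sup'_apply, Finset.sup'_univ_eq_ciSup]
    rw [h]
    exact Finset.measurable_sup' Finset.univ_nonempty fun i _ => (measurable_pi_apply i).abs
  have hF_int : Integrable (fun z : Fin d → ℝ => ⨆ i, |z i|) μd := by
    refine (integrable_finset_sum Finset.univ fun i _ => habs_int i).mono'
      hFm.aestronglyMeasurable ?_
    filter_upwards with z
    rw [Real.norm_eq_abs, abs_of_nonneg (Real.iSup_nonneg fun i => abs_nonneg (z i))]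
    exact ciSup_le fun i => Finset.single_le_sum (fun j _ => abs_nonneg (z j)) (Finset.mem_univ i)
  have hpt : ∀ z ∈ S, (⨆ i, |z i|) ≤ ∑ i, g (z i) := by
    intro z hz
    obtain ⟨j, hj⟩ := Finite.exists_max fun i => |z i|
    have h3 : ε ≤ Real.sqrt d * |z j| := by
      calc ε ≤ Real.sqrt (∑ i, z i ^ 2) := hz
        _ ≤ Real.sqrt ((d : ℝ) * |z j| ^ 2) := by
            refine Real.sqrt_le_sqrt ?_
            calc ∑ i, z i ^ 2 ≤ ∑ _i : Fin d, |z j| ^ 2 :=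
                Finset.sum_le_sum fun i _ => by
                  rw [← sq_abs (z i)]; exact pow_le_pow_left₀ (abs_nonneg _) (hj i) 2
              _ = (d : ℝ) * |z j| ^ 2 := by
                  simp [Finset.sum_const, Finset.card_univ, nsmul_eq_mul]
        _ = Real.sqrt d * |z j| := by
            rw [Real.sqrt_mul (Nat.cast_nonneg d), Real.sqrt_sq (abs_nonneg _)]
    have h4 : a ≤ |z j| := (div_le_iff₀ hsd).mpr (by linarith)
    have h5 : g (z j) = |z j| := by
      rw [hg_def]
      exact Set.indicator_of_mem (show z j ∈ {x : ℝ | a ≤ |x|} from h4) _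
    calc (⨆ i, |z i|) ≤ |z j| := ciSup_le hj
      _ = g (z j) := h5.symm
      _ ≤ ∑ i, g (z i) := Finset.single_le_sum (f := fun i => g (z i))
          (fun i _ => Set.indicator_nonneg (fun y _ => abs_nonneg y) _) (Finset.mem_univ j)
  calc ∫ z in S, (⨆ i, |z i|) ∂μd
      ≤ ∫ z in S, (∑ i, g (z i)) ∂μd :=
        setIntegral_mono_on hF_int.integrableOn hG_int.integrableOn hSm hpt
    _ ≤ ∫ z, (∑ i, g (z i)) ∂μd :=
        setIntegral_le_integral hG_int (Filter.Eventually.of_forall fun z =>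
          Finset.sum_nonneg fun i _ => Set.indicator_nonneg (fun y _ => abs_nonneg y) _)
    _ = ∑ i : Fin d, ∫ z, g (z i) ∂μd := integral_finset_sum _ fun i _ => hcoord_int i
    _ = d * (2 / Real.sqrt (2 * π) * Real.exp (-a ^ 2 / 2)) := by
        rw [Finset.sum_congr rfl fun i _ => hcoord_val i]
        simp [Finset.sum_const, Finset.card_univ, nsmul_eq_mul]
    _ = 2 / Real.sqrt (2 * Real.pi) * d * Real.exp (-ε ^ 2 / (2 * d)) := by
        have haa : a ^ 2 = ε ^ 2 / d := by
          rw [ha_def, div_pow, Real.sq_sqrt (Nat.cast_nonneg d)]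
        rw [haa]
        have h2 : -(ε ^ 2 / (d:ℝ)) / 2 = -ε ^ 2 / (2 * d) := by ring
        rw [h2]; ring
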